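/- arXiv:1509.03783 — 4 statements merged into one kernel-verified Lean document; each statement's English description precedes it below -/
import Mathlib

section
/- Let θ₀, ε ∈ ℝ satisfy ε + θ₀ + 1 > 0 and ε − θ₀ − 1 > 0, and set κ = √(ε²−(1+θ₀)²) and λ = √((ε−θ₀−1)/(ε+θ₀+1)). Let ψ₁, ψ₂ : ℝ → ℝ be differentiable with ψ₁' = (1+θ₀+ε)ψ₂ and ψ₂' = (1+θ₀−ε)ψ₁, and let a < b be reals with ψ₁(a) ≠ 0 and ψ₁(b) ≠ 0. Setting P_a = −ψ₂(a)/ψ₁(a) and P_b = −ψ₂(b)/ψ₁(b), the identity (P_a − P_b)·cos(κ(b−a)) + (λ + P_a·P_b/λ)·sin(κ(b−a)) = 0 holds. -/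
open Real

/-- The algebraic content of the recurrence formula (Eq. 5 of the paper) relating the
logarithmic-derivative data of the wave function at the two ends of a constant-potential
segment. -/
theorem dirac_recurrence_identity
    (θ₀ ε : ℝ) (h1 : ε + θ₀ + 1 > 0) (h2 : ε - θ₀ - 1 > 0)
    (κ lam : ℝ)
    (hκ : κ = Real.sqrt (ε ^ 2 - (1 + θ₀) ^ 2))
    (hlam : lam = Real.sqrt ((ε - θ₀ - 1) / (ε + θ₀ + 1)))
    (ψ₁ ψ₂ : ℝ → ℝ)
    (hd1 : Differentiable ℝ ψ₁) (hd2 : Differentiable ℝ ψ₂)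
    (heq1 : ∀ ξ, deriv ψ₁ ξ = (1 + θ₀ + ε) * ψ₂ ξ)
    (heq2 : ∀ ξ, deriv ψ₂ ξ = (1 + θ₀ - ε) * ψ₁ ξ)
    (a b : ℝ) (hab : a < b) (ha : ψ₁ a ≠ 0) (hb : ψ₁ b ≠ 0)
    (Pa Pb : ℝ) (hPa : Pa = -ψ₂ a / ψ₁ a) (hPb : Pb = -ψ₂ b / ψ₁ b) :
    (Pa - Pb) * Real.cos (κ * (b - a)) +
      (lam + Pa * Pb / lam) * Real.sin (κ * (b - a)) = 0 := by
  set c : ℝ := 1 + θ₀ + ε with hc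
  set d : ℝ := 1 + θ₀ - ε with hd
  have hcpos : 0 < c := by rw [hc]; linarith
  have hdneg : 0 < -d := by rw [hd]; linarith
  have hκpos : 0 < κ := by
    rw [hκ]; apply Real.sqrt_pos.mpr; nlinarith
  have hκsq : κ ^ 2 = -(c * d) := by
    rw [hκ, Real.sq_sqrt (by nlinarith)]; rw [hc, hd]; ring
  have hlampos : 0 < lam := by
    rw [hlam]; apply Real.sqrt_pos.mpr
    exact div_pos h2 h1
  have hlamsq : lam ^ 2 = -d / c := by
    rw [hlam, Real.sq_sqrt (le_of_lt (div_pos h2 h1)), hc, hd]; ring_nf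
  have hlc : lam * c = κ := by
    have h1' : lam * c = Real.sqrt ((lam * c) ^ 2) :=
      (Real.sqrt_sq (by positivity)).symm
    have h2' : (lam * c) ^ 2 = κ ^ 2 := by
      have : (lam * c) ^ 2 = lam ^ 2 * c ^ 2 := by ring
      rw [this, hlamsq, hκsq]
      field_simp
    rw [h1', h2', Real.sqrt_sq (le_of_lt hκpos)]
  have hlκ : lam * κ = -d := by
    have : lam * κ = lam ^ 2 * c := by rw [← hlc]; ring
    rw [this, hlamsq]
    field_simp
  -- derivative hypotheses in HasDerivAt form
  have H1 : ∀ ξ, HasDerivAt ψ₁ (c * ψ₂ ξ) ξ := by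
    intro ξ
    have := (hd1 ξ).hasDerivAt
    rwa [heq1 ξ] at this
  have H2 : ∀ ξ, HasDerivAt ψ₂ (d * ψ₁ ξ) ξ := by
    intro ξ
    have := (hd2 ξ).hasDerivAt
    rwa [heq2 ξ] at this
  have hlin : ∀ ξ : ℝ, HasDerivAt (fun ξ => κ * (ξ - a)) κ ξ := by
    intro ξ
    simpa using ((hasDerivAt_id ξ).sub_const a).const_mul κ
  -- two conserved quantities
  have key : ∀ (u v : ℝ) (φ χ : ℝ → ℝ),
      (∀ ξ, HasDerivAt φ (u * χ ξ) ξ) → (∀ ξ, HasDerivAt χ (v * φ ξ) ξ) →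
      u * v = -(κ ^ 2) →
      ∀ ξ, φ a = Real.cos (κ * (ξ - a)) * φ ξ - (u / κ) * (Real.sin (κ * (ξ - a)) * χ ξ) := by
    intro u v φ χ hφ hχ huv ξ
    set F : ℝ → ℝ := fun ξ =>
      Real.cos (κ * (ξ - a)) * φ ξ - (u / κ) * (Real.sin (κ * (ξ - a)) * χ ξ) with hF
    have hFd : ∀ x, HasDerivAt F 0 x := by
      intro x
      have hcos : HasDerivAt (fun ξ => Real.cos (κ * (ξ - a)))
          (-Real.sin (κ * (x - a)) * κ) x := (hlin x).cos
      have hsin : HasDerivAt (fun ξ => Real.sin (κ * (ξ - a)))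
          (Real.cos (κ * (x - a)) * κ) x := (hlin x).sin
      have hD : HasDerivAt F
          ((-Real.sin (κ * (x - a)) * κ) * φ x + Real.cos (κ * (x - a)) * (u * χ x)
            - (u / κ) * ((Real.cos (κ * (x - a)) * κ) * χ x
              + Real.sin (κ * (x - a)) * (v * φ x))) x :=
        (hcos.mul (hφ x)).sub (((hsin.mul (hχ x))).const_mul (u / κ))
      have : (-Real.sin (κ * (x - a)) * κ) * φ x + Real.cos (κ * (x - a)) * (u * χ x)
            - (u / κ) * ((Real.cos (κ * (x - a)) * κ) * χ x
              + Real.sin (κ * (x - a)) * (v * φ x)) = 0 := by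
        field_simp
        linear_combination (-(Real.sin (κ * (x - a)) * φ x)) * huv
      rwa [this] at hD
    have hconst : F ξ = F a := by
      have := is_const_of_deriv_eq_zero (f := F)
        (fun x => (hFd x).differentiableAt) (fun x => (hFd x).deriv) ξ a
      exact this
    have hFa : F a = φ a := by
      simp [hF]
    rw [← hFa, ← hconst, hF]
  have rel1 := key c d ψ₁ ψ₂ H1 H2 (by linarith [hκsq]) b
  have rel2 := key d c ψ₂ ψ₁ H2 H1 (by nlinarith [hκsq]) b
  -- final algebra
  set C := Real.cos (κ * (b - a)) with hC
  set S := Real.sin (κ * (b - a)) with hS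
  have hκne : κ ≠ 0 := ne_of_gt hκpos
  have hlamne : lam ≠ 0 := ne_of_gt hlampos
  have hcκ : c / κ = 1 / lam := by
    rw [← hlc]; field_simp
  have hdκ : d / κ = -lam := by
    rw [div_eq_iff hκne]; linarith [hlκ]
  have main : ((-ψ₂ a) * ψ₁ b + ψ₂ b * ψ₁ a) * C * lam
      + (lam ^ 2 * ψ₁ a * ψ₁ b + ψ₂ a * ψ₂ b) * S = 0 := by
    rw [rel1, rel2, hcκ, hdκ]
    field_simp
    ring
  rw [hPa, hPb]
  field_simp
  linear_combination main
end

section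
/- Let α, β, α', β' be 2×2 complex matrices that are Hermitian and satisfy α² = β² = α'² = β'² = I and αβ + βα = 0 = α'β' + β'α'. Then there exists a unitary 2×2 complex matrix S such that α = S⁻¹ α' S and β = S⁻¹ β' S. -/
open Matrix

private lemma trace_zero_of_anti' (α β : Matrix (Fin 2) (Fin 2) ℂ) (hα2 : α * α = 1)
    (hanti : α * β + β * α = 0) : β.trace = 0 := by
  have h : β = -(α * β * α) := by
    have h1 : β * α = -(α * β) := by linear_combination (norm := noncomm_ring) hanti
    calc β = β * (α * α) := by rw [hα2, mul_one]
    _ = (β * α) * α := by noncomm_ring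
    _ = -(α * β * α) := by rw [h1]; noncomm_ring
  have h2 := congrArg Matrix.trace h
  rw [Matrix.trace_neg, Matrix.trace_mul_cycle] at h2
  rw [hα2, Matrix.one_mul] at h2
  linear_combination h2 / 2

private lemma unit_aux' (a c u v : ℂ) (ha : starRingEnd ℂ a = a)
    (hu : starRingEnd ℂ u = u) (hv : starRingEnd ℂ v = v)
    (hune : u ≠ 0) (hvne : v ≠ 0)
    (hcc : c * starRingEnd ℂ c = 1 - a * a)
    (hu2 : u * u = 2 * (1 - a)) (hv2 : v * v = 2 * (1 + a)) :
    (!![c/u, c/v; (1-a)/u, -((1+a)/v)])ᴴ * !![c/u, c/v; (1-a)/u, -((1+a)/v)] = 1 := by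
  ext i j
  fin_cases i
  · fin_cases j
    · simp [Matrix.mul_apply, Fin.sum_univ_two, Matrix.conjTranspose_apply, Matrix.one_apply,
        Complex.star_def, map_div₀, ha, hu, hv]
      field_simp
      linear_combination hcc - hu2
    · simp [Matrix.mul_apply, Fin.sum_univ_two, Matrix.conjTranspose_apply, Matrix.one_apply,
        Complex.star_def, map_div₀, ha, hu, hv]
      field_simp
      linear_combination hcc
  · fin_cases j
    · simp [Matrix.mul_apply, Fin.sum_univ_two, Matrix.conjTranspose_apply, Matrix.one_apply,
        Complex.star_def, map_div₀, ha, hu, hv]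
      field_simp
      linear_combination hcc
    · simp [Matrix.mul_apply, Fin.sum_univ_two, Matrix.conjTranspose_apply, Matrix.one_apply,
        Complex.star_def, map_div₀, ha, hu, hv]
      field_simp
      linear_combination hcc - hv2

private lemma diag_aux' (a c u v : ℂ) (hune : u ≠ 0) (hvne : v ≠ 0)
    (hcc : c * starRingEnd ℂ c = 1 - a * a) :
    !![a, c; starRingEnd ℂ c, -a] * !![c/u, c/v; (1-a)/u, -((1+a)/v)]
      = !![c/u, c/v; (1-a)/u, -((1+a)/v)] * !![1,0;0,-1] := by
  ext i j
  fin_cases i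
  · fin_cases j
    · simp [Matrix.mul_apply, Fin.sum_univ_two]
      field_simp
      ring
    · simp [Matrix.mul_apply, Fin.sum_univ_two]
      field_simp
      ring
  · fin_cases j
    · simp [Matrix.mul_apply, Fin.sum_univ_two]
      field_simp
      linear_combination hcc
    · simp [Matrix.mul_apply, Fin.sum_univ_two]
      field_simp
      linear_combination hcc

private lemma step1' (α : Matrix (Fin 2) (Fin 2) ℂ) (hH : α.IsHermitian) (h2 : α * α = 1)
    (htr : α.trace = 0) :
    ∃ U : Matrix (Fin 2) (Fin 2) ℂ, Uᴴ * U = 1 ∧ Uᴴ * α * U = !![1,0;0,-1] := by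
  obtain ⟨a, ha_def⟩ : ∃ x, x = α 0 0 := ⟨_, rfl⟩
  obtain ⟨c, hc_def⟩ : ∃ x, x = α 0 1 := ⟨_, rfl⟩
  have hc : α 1 0 = starRingEnd ℂ c := by rw [hc_def]; simpa using (hH.apply 1 0).symm
  have hd : α 1 1 = -a := by
    have h := htr; rw [Matrix.trace_fin_two] at h; rw [ha_def]; linear_combination h
  have ha : starRingEnd ℂ a = a := by rw [ha_def]; simpa using hH.apply 0 0
  have e1 : ((α*α) 0 0) = (1 : Matrix (Fin 2) (Fin 2) ℂ) 0 0 := by rw [h2]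
  simp [Matrix.mul_apply, Fin.sum_univ_two, Matrix.one_apply, hc, ← ha_def, ← hc_def] at e1
  have hcc : c * starRingEnd ℂ c = 1 - a * a := by linear_combination e1
  have hα_eq : α = !![a, c; starRingEnd ℂ c, -a] := by
    ext i j
    fin_cases i <;> fin_cases j <;> simp [← ha_def, ← hc_def, hc, hd]
  by_cases h0 : c = 0
  · have haa : a * a = 1 := by
      have h := hcc; rw [h0] at h; simp at h; linear_combination h
    rcases mul_self_eq_one_iff.mp haa with h1 | h1
    · refine ⟨1, by simp, ?_⟩
      rw [hα_eq, h0, h1]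
      norm_num
    · refine ⟨!![0,1;1,0], ?_, ?_⟩
      · ext i j
        fin_cases i <;> fin_cases j <;>
          simp [Matrix.mul_apply, Fin.sum_univ_two, Matrix.conjTranspose_apply, Matrix.one_apply]
      · rw [hα_eq, h0, h1]
        ext i j
        fin_cases i <;> fin_cases j <;>
          simp [Matrix.mul_apply, Fin.sum_univ_two, Matrix.conjTranspose_apply]
  · -- c ≠ 0
    have haIm : a = (a.re : ℂ) := (Complex.conj_eq_iff_re.mp ha).symm
    have hns : ((Complex.normSq c : ℝ) : ℂ) = 1 - a * a := by
      rw [← Complex.mul_conj]; exact hcc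
    have hlt : a.re ^ 2 < 1 := by
      have hpos : 0 < Complex.normSq c := Complex.normSq_pos.mpr h0
      have hcast : ((Complex.normSq c : ℝ) : ℂ) = ((1 - a.re ^ 2 : ℝ) : ℂ) := by
        rw [hns]; push_cast; linear_combination (-a - (a.re : ℂ)) * haIm
      have hr : Complex.normSq c = 1 - a.re ^ 2 := by exact_mod_cast hcast
      nlinarith
    have h1a : (0:ℝ) < 2 * (1 - a.re) := by nlinarith
    have h2a : (0:ℝ) < 2 * (1 + a.re) := by nlinarith
    obtain ⟨u, hu_def⟩ : ∃ x : ℂ, x = ((Real.sqrt (2 * (1 - a.re)) : ℝ) : ℂ) := ⟨_, rfl⟩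
    obtain ⟨v, hv_def⟩ : ∃ x : ℂ, x = ((Real.sqrt (2 * (1 + a.re)) : ℝ) : ℂ) := ⟨_, rfl⟩
    have hu : starRingEnd ℂ u = u := by rw [hu_def]; exact Complex.conj_ofReal _
    have hv : starRingEnd ℂ v = v := by rw [hv_def]; exact Complex.conj_ofReal _
    have hune : u ≠ 0 := by
      rw [hu_def]; exact Complex.ofReal_ne_zero.mpr (Real.sqrt_pos.mpr h1a).ne'
    have hvne : v ≠ 0 := by
      rw [hv_def]; exact Complex.ofReal_ne_zero.mpr (Real.sqrt_pos.mpr h2a).ne'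
    have hu2 : u * u = 2 * (1 - a) := by
      rw [hu_def, ← Complex.ofReal_mul, Real.mul_self_sqrt h1a.le]
      push_cast; linear_combination 2 * haIm
    have hv2 : v * v = 2 * (1 + a) := by
      rw [hv_def, ← Complex.ofReal_mul, Real.mul_self_sqrt h2a.le]
      push_cast; linear_combination (-2 : ℂ) * haIm
    have hUU := unit_aux' a c u v ha hu hv hune hvne hcc hu2 hv2
    have hAU := diag_aux' a c u v hune hvne hcc
    refine ⟨!![c/u, c/v; (1-a)/u, -((1+a)/v)], hUU, ?_⟩
    rw [hα_eq]
    calc (!![c/u, c/v; (1-a)/u, -((1+a)/v)])ᴴ * !![a, c; starRingEnd ℂ c, -a] *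
          !![c/u, c/v; (1-a)/u, -((1+a)/v)]
        = (!![c/u, c/v; (1-a)/u, -((1+a)/v)])ᴴ *
          (!![a, c; starRingEnd ℂ c, -a] * !![c/u, c/v; (1-a)/u, -((1+a)/v)]) := by
          rw [Matrix.mul_assoc]
    _ = (!![c/u, c/v; (1-a)/u, -((1+a)/v)])ᴴ *
          (!![c/u, c/v; (1-a)/u, -((1+a)/v)] * !![1,0;0,-1]) := by rw [hAU]
    _ = ((!![c/u, c/v; (1-a)/u, -((1+a)/v)])ᴴ *
          !![c/u, c/v; (1-a)/u, -((1+a)/v)]) * !![1,0;0,-1] := by rw [Matrix.mul_assoc]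
    _ = !![1,0;0,-1] := by rw [hUU, Matrix.one_mul]

private lemma step2' (B : Matrix (Fin 2) (Fin 2) ℂ) (hH : B.IsHermitian) (h2 : B * B = 1)
    (hanti : !![(1:ℂ),0;0,-1] * B + B * !![(1:ℂ),0;0,-1] = 0) :
    ∃ W : Matrix (Fin 2) (Fin 2) ℂ, Wᴴ * W = 1 ∧
      Wᴴ * !![(1:ℂ),0;0,-1] * W = !![1,0;0,-1] ∧ Wᴴ * B * W = !![0,1;1,0] := by
  obtain ⟨q, hq_def⟩ : ∃ x, x = B 0 1 := ⟨_, rfl⟩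
  have hq10 : B 1 0 = starRingEnd ℂ q := by rw [hq_def]; simpa using (hH.apply 1 0).symm
  have h00 : B 0 0 = 0 := by
    have e := congrFun (congrFun hanti 0) 0
    simp [Matrix.mul_apply, Fin.sum_univ_two, Matrix.vecMul, dotProduct,
      Matrix.vecHead, Matrix.vecTail] at e
    exact e
  have h11 : B 1 1 = 0 := by
    have e := congrFun (congrFun hanti 1) 1
    simp [Matrix.mul_apply, Fin.sum_univ_two, Matrix.vecMul, dotProduct,
      Matrix.vecHead, Matrix.vecTail] at e
    exact e
  have hqq : q * starRingEnd ℂ q = 1 := by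
    have e : ((B * B) 0 0) = (1 : Matrix (Fin 2) (Fin 2) ℂ) 0 0 := by rw [h2]
    simp [Matrix.mul_apply, Fin.sum_univ_two, Matrix.one_apply, h00, hq10, ← hq_def] at e
    linear_combination e
  have hB_eq : B = !![0, q; starRingEnd ℂ q, 0] := by
    ext i j
    fin_cases i <;> fin_cases j <;> simp [h00, h11, hq10, ← hq_def]
  refine ⟨!![1, 0; 0, starRingEnd ℂ q], ?_, ?_, ?_⟩
  · ext i j
    fin_cases i <;> fin_cases j <;>
      simp [Matrix.mul_apply, Fin.sum_univ_two, Matrix.conjTranspose_apply, Matrix.one_apply,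
        Complex.star_def]
    linear_combination hqq
  · ext i j
    fin_cases i <;> fin_cases j <;>
      simp [Matrix.mul_apply, Fin.sum_univ_two, Matrix.conjTranspose_apply, Complex.star_def]
    linear_combination hqq
  · rw [hB_eq]
    ext i j
    fin_cases i
    · fin_cases j
      · simp [Matrix.mul_apply, Fin.sum_univ_two, Matrix.conjTranspose_apply, Complex.star_def]
      · simp [Matrix.mul_apply, Fin.sum_univ_two, Matrix.conjTranspose_apply, Complex.star_def]
        linear_combination hqq
    · fin_cases j
      · simp [Matrix.mul_apply, Fin.sum_univ_two, Matrix.conjTranspose_apply, Complex.star_def]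
        linear_combination hqq
      · simp [Matrix.mul_apply, Fin.sum_univ_two, Matrix.conjTranspose_apply, Complex.star_def]

private lemma key' (α β : Matrix (Fin 2) (Fin 2) ℂ)
    (hα : α.IsHermitian) (hβ : β.IsHermitian)
    (hα2 : α * α = 1) (hβ2 : β * β = 1)
    (hanti : α * β + β * α = 0) :
    ∃ V : Matrix (Fin 2) (Fin 2) ℂ, Vᴴ * V = 1 ∧ V * Vᴴ = 1 ∧
      Vᴴ * α * V = !![1,0;0,-1] ∧ Vᴴ * β * V = !![0,1;1,0] := by
  have htrα : α.trace = 0 := by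
    apply trace_zero_of_anti' β α hβ2
    linear_combination (norm := noncomm_ring) hanti
  obtain ⟨U, hUU, hUα⟩ := step1' α hα hα2 htrα
  have hUUr : U * Uᴴ = 1 := mul_eq_one_comm.mp hUU
  set B := Uᴴ * β * U with hB
  have hBH : B.IsHermitian := by
    rw [hB, Matrix.IsHermitian]
    rw [Matrix.conjTranspose_mul, Matrix.conjTranspose_mul, Matrix.conjTranspose_conjTranspose,
      hβ.eq]
    noncomm_ring
  have hB2 : B * B = 1 := by
    rw [hB]
    calc Uᴴ * β * U * (Uᴴ * β * U) = Uᴴ * β * (U * Uᴴ) * β * U := by noncomm_ring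
    _ = Uᴴ * (β * β) * U := by rw [hUUr]; noncomm_ring
    _ = 1 := by rw [hβ2, Matrix.mul_one, hUU]
  have hBanti : !![(1:ℂ),0;0,-1] * B + B * !![(1:ℂ),0;0,-1] = 0 := by
    rw [← hUα, hB]
    calc Uᴴ * α * U * (Uᴴ * β * U) + Uᴴ * β * U * (Uᴴ * α * U)
        = Uᴴ * α * (U * Uᴴ) * β * U + Uᴴ * β * (U * Uᴴ) * α * U := by noncomm_ring
    _ = Uᴴ * (α * β + β * α) * U := by rw [hUUr]; noncomm_ring
    _ = 0 := by rw [hanti]; simp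
  obtain ⟨W, hWW, hWσ, hWB⟩ := step2' B hBH hB2 hBanti
  refine ⟨U * W, ?_, ?_, ?_, ?_⟩
  · rw [Matrix.conjTranspose_mul]
    calc Wᴴ * Uᴴ * (U * W) = Wᴴ * (Uᴴ * U) * W := by noncomm_ring
    _ = 1 := by rw [hUU]; rw [Matrix.mul_one]; exact hWW
  · apply mul_eq_one_comm.mp
    rw [Matrix.conjTranspose_mul]
    calc Wᴴ * Uᴴ * (U * W) = Wᴴ * (Uᴴ * U) * W := by noncomm_ring
    _ = 1 := by rw [hUU]; rw [Matrix.mul_one]; exact hWW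
  · rw [Matrix.conjTranspose_mul]
    calc Wᴴ * Uᴴ * α * (U * W) = Wᴴ * (Uᴴ * α * U) * W := by noncomm_ring
    _ = !![1,0;0,-1] := by rw [hUα]; exact hWσ
  · rw [Matrix.conjTranspose_mul]
    calc Wᴴ * Uᴴ * β * (U * W) = Wᴴ * (Uᴴ * β * U) * W := by noncomm_ring
    _ = !![0,1;1,0] := by rw [← hB]; exact hWB

/-- Pauli's fundamental theorem in the two-dimensional Hermitian case: any two
representations of the one-dimensional Dirac matrices are unitarily equivalent. -/
theorem pauli_fundamental_theorem
    (α β α' β' : Matrix (Fin 2) (Fin 2) ℂ)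
    (hα : α.IsHermitian) (hβ : β.IsHermitian)
    (hα' : α'.IsHermitian) (hβ' : β'.IsHermitian)
    (hα2 : α * α = 1) (hβ2 : β * β = 1)
    (hα'2 : α' * α' = 1) (hβ'2 : β' * β' = 1)
    (hanti : α * β + β * α = 0) (hanti' : α' * β' + β' * α' = 0) :
    ∃ S : Matrix (Fin 2) (Fin 2) ℂ,
      Sᴴ * S = 1 ∧ S * Sᴴ = 1 ∧ α = S⁻¹ * α' * S ∧ β = S⁻¹ * β' * S := by
  obtain ⟨V, hVV, hVVr, hVα, hVβ⟩ := key' α β hα hβ hα2 hβ2 hanti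
  obtain ⟨V', hV'V', hV'V'r, hV'α, hV'β⟩ := key' α' β' hα' hβ' hα'2 hβ'2 hanti'
  refine ⟨V' * Vᴴ, ?_, ?_, ?_, ?_⟩
  · rw [Matrix.conjTranspose_mul, Matrix.conjTranspose_conjTranspose]
    calc V * V'ᴴ * (V' * Vᴴ) = V * (V'ᴴ * V') * Vᴴ := by noncomm_ring
    _ = 1 := by rw [hV'V', Matrix.mul_one, hVVr]
  · rw [Matrix.conjTranspose_mul, Matrix.conjTranspose_conjTranspose]
    calc V' * Vᴴ * (V * V'ᴴ) = V' * (Vᴴ * V) * V'ᴴ := by noncomm_ring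
    _ = 1 := by rw [hVV, Matrix.mul_one, hV'V'r]
  all_goals {
    have hSinv : (V' * Vᴴ)⁻¹ = V * V'ᴴ := by
      apply Matrix.inv_eq_left_inv
      calc V * V'ᴴ * (V' * Vᴴ) = V * (V'ᴴ * V') * Vᴴ := by noncomm_ring
      _ = 1 := by rw [hV'V', Matrix.mul_one, hVVr]
    rw [hSinv]
    first
    | (calc α = (V * Vᴴ) * α * (V * Vᴴ) := by rw [hVVr]; noncomm_ring
        _ = V * (Vᴴ * α * V) * Vᴴ := by noncomm_ring
        _ = V * !![1,0;0,-1] * Vᴴ := by rw [hVα]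
        _ = V * (V'ᴴ * α' * V') * Vᴴ := by rw [hV'α]
        _ = V * V'ᴴ * α' * (V' * Vᴴ) := by noncomm_ring)
    | (calc β = (V * Vᴴ) * β * (V * Vᴴ) := by rw [hVVr]; noncomm_ring
        _ = V * (Vᴴ * β * V) * Vᴴ := by noncomm_ring
        _ = V * !![0,1;1,0] * Vᴴ := by rw [hVβ]
        _ = V * (V'ᴴ * β' * V') * Vᴴ := by rw [hV'β]
        _ = V * V'ᴴ * β' * (V' * Vᴴ) := by noncomm_ring)
  }
end

section
/- Let θ : ℝ → ℝ be continuous with 1 + θ(ξ) ≥ 0 for all ξ, let ε > 0, and let ξ_L < ξ_R satisfy 1 + θ(ξ_L) = 1 + θ(ξ_R) = ε. Let ψ₁, ψ₂ : ℝ → ℝ be a differentiable solution of ψ₁' = (1+θ+ε)ψ₂, ψ₂' = (1+θ−ε)ψ₁ such that ψ₁(ξ) → 0 and ψ₂(ξ) → 0 as ξ → ±∞, and such that ψ₁(ξ) ≠ 0 and ψ₂(ξ) ≠ 0 for all ξ ≥ ξ_R and all ξ ≤ ξ_L. Then ψ₁(ξ_R)·ψ₂(ξ_R) < 0 and ψ₁(ξ_L)·ψ₂(ξ_L)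 > 0; equivalently, P(ξ_L) < 0 < P(ξ_R) where P = −ψ₂/ψ₁. -/
open Filter Set

private lemma dirac_deriv_g (θ : ℝ → ℝ) (ε : ℝ) (ψ₁ ψ₂ : ℝ → ℝ)
    (hd1 : Differentiable ℝ ψ₁) (hd2 : Differentiable ℝ ψ₂)
    (heq1 : ∀ ξ, deriv ψ₁ ξ = (1 + θ ξ + ε) * ψ₂ ξ)
    (heq2 : ∀ ξ, deriv ψ₂ ξ = (1 + θ ξ - ε) * ψ₁ ξ) (ξ : ℝ) :
    deriv (fun x => ψ₁ x * ψ₁ x - ψ₂ x * ψ₂ x) ξ = 4 * ε * (ψ₁ ξ * ψ₂ ξ) := by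
  have h1 := (hd1 ξ).hasDerivAt
  have h2 := (hd2 ξ).hasDerivAt
  have : deriv (fun x => ψ₁ x * ψ₁ x - ψ₂ x * ψ₂ x) ξ = _ := ((h1.mul h1).sub (h2.mul h2)).deriv
  rw [this, heq1, heq2]
  ring

private lemma dirac_deriv_h (θ : ℝ → ℝ) (ε : ℝ) (ψ₁ ψ₂ : ℝ → ℝ)
    (hd1 : Differentiable ℝ ψ₁) (hd2 : Differentiable ℝ ψ₂)
    (heq1 : ∀ ξ, deriv ψ₁ ξ = (1 + θ ξ + ε) * ψ₂ ξ)
    (heq2 : ∀ ξ, deriv ψ₂ ξ = (1 + θ ξ - ε) * ψ₁ ξ) (ξ : ℝ) :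
    deriv (fun x => ψ₁ x * ψ₂ x) ξ
      = (1 + θ ξ) * (ψ₁ ξ * ψ₁ ξ + ψ₂ ξ * ψ₂ ξ)
        - ε * (ψ₁ ξ * ψ₁ ξ - ψ₂ ξ * ψ₂ ξ) := by
  have h1 := (hd1 ξ).hasDerivAt
  have h2 := (hd2 ξ).hasDerivAt
  have : deriv (fun x => ψ₁ x * ψ₂ x) ξ = _ := (h1.mul h2).deriv
  rw [this, heq1, heq2]
  ring

private lemma dirac_ray_top (θ : ℝ → ℝ) (hθ0 : ∀ ξ, 1 + θ ξ ≥ 0)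
    (ε : ℝ) (hε : 0 < ε) (ψ₁ ψ₂ : ℝ → ℝ)
    (hd1 : Differentiable ℝ ψ₁) (hd2 : Differentiable ℝ ψ₂)
    (heq1 : ∀ ξ, deriv ψ₁ ξ = (1 + θ ξ + ε) * ψ₂ ξ)
    (heq2 : ∀ ξ, deriv ψ₂ ξ = (1 + θ ξ - ε) * ψ₁ ξ)
    (hdecay1top : Tendsto ψ₁ atTop (nhds 0))
    (hdecay2top : Tendsto ψ₂ atTop (nhds 0))
    (a : ℝ) (hpos : ∀ ξ, a ≤ ξ → 0 < ψ₁ ξ * ψ₂ ξ) : False := by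
  set g : ℝ → ℝ := fun x => ψ₁ x * ψ₁ x - ψ₂ x * ψ₂ x with hg
  set h : ℝ → ℝ := fun x => ψ₁ x * ψ₂ x with hh
  have hdg : Differentiable ℝ g := (hd1.mul hd1).sub (hd2.mul hd2)
  have hdh : Differentiable ℝ h := hd1.mul hd2
  -- g is monotone on [a, ∞)
  have hgmono : MonotoneOn g (Ici a) := by
    apply monotoneOn_of_deriv_nonneg (convex_Ici a) hdg.continuous.continuousOn
      (hdg.differentiableOn)
    intro x hx
    rw [interior_Ici] at hx
    rw [dirac_deriv_g θ ε ψ₁ ψ₂ hd1 hd2 heq1 heq2]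
    have := hpos x (le_of_lt hx)
    positivity
  have hgtend : Tendsto g atTop (nhds 0) := by
    have := (hdecay1top.mul hdecay1top).sub (hdecay2top.mul hdecay2top)
    simpa using this
  -- hence g ≤ 0 on [a, ∞)
  have hgle : ∀ x, a ≤ x → g x ≤ 0 := by
    intro x hx
    refine ge_of_tendsto hgtend ?_
    filter_upwards [eventually_ge_atTop x] with t ht
    exact hgmono hx (le_trans hx ht) ht
  -- hence h is monotone on [a, ∞)
  have hhmono : MonotoneOn h (Ici a) := by
    apply monotoneOn_of_deriv_nonneg (convex_Ici a) hdh.continuous.continuousOn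
      (hdh.differentiableOn)
    intro x hx
    rw [interior_Ici] at hx
    rw [dirac_deriv_h θ ε ψ₁ ψ₂ hd1 hd2 heq1 heq2]
    have h1 := hθ0 x
    have h2 := hgle x (le_of_lt hx)
    have h3 : ψ₁ x * ψ₁ x - ψ₂ x * ψ₂ x ≤ 0 := h2
    nlinarith [sq_nonneg (ψ₁ x), sq_nonneg (ψ₂ x), mul_self_nonneg (ψ₁ x), mul_self_nonneg (ψ₂ x)]
  have hhtend : Tendsto h atTop (nhds 0) := by
    have := hdecay1top.mul hdecay2top
    simpa using this
  have : h a ≤ 0 := by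
    refine ge_of_tendsto hhtend ?_
    filter_upwards [eventually_ge_atTop a] with t ht
    exact hhmono (le_refl a) ht ht
  exact absurd this (not_le.mpr (hpos a le_rfl))

private lemma dirac_ray_bot (θ : ℝ → ℝ) (hθ0 : ∀ ξ, 1 + θ ξ ≥ 0)
    (ε : ℝ) (hε : 0 < ε) (ψ₁ ψ₂ : ℝ → ℝ)
    (hd1 : Differentiable ℝ ψ₁) (hd2 : Differentiable ℝ ψ₂)
    (heq1 : ∀ ξ, deriv ψ₁ ξ = (1 + θ ξ + ε) * ψ₂ ξ)
    (heq2 : ∀ ξ, deriv ψ₂ ξ = (1 + θ ξ - ε) * ψ₁ ξ)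
    (hdecay1bot : Tendsto ψ₁ atBot (nhds 0))
    (hdecay2bot : Tendsto ψ₂ atBot (nhds 0))
    (a : ℝ) (hneg : ∀ ξ, ξ ≤ a → ψ₁ ξ * ψ₂ ξ < 0) : False := by
  set g : ℝ → ℝ := fun x => ψ₁ x * ψ₁ x - ψ₂ x * ψ₂ x with hg
  set h : ℝ → ℝ := fun x => ψ₁ x * ψ₂ x with hh
  have hdg : Differentiable ℝ g := (hd1.mul hd1).sub (hd2.mul hd2)
  have hdh : Differentiable ℝ h := hd1.mul hd2
  -- g is antitone on (-∞, a]
  have hganti : AntitoneOn g (Iic a) := by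
    apply antitoneOn_of_deriv_nonpos (convex_Iic a) hdg.continuous.continuousOn
      (hdg.differentiableOn)
    intro x hx
    rw [interior_Iic] at hx
    rw [dirac_deriv_g θ ε ψ₁ ψ₂ hd1 hd2 heq1 heq2]
    have := hneg x (le_of_lt hx)
    nlinarith
  have hgtend : Tendsto g atBot (nhds 0) := by
    have := (hdecay1bot.mul hdecay1bot).sub (hdecay2bot.mul hdecay2bot)
    simpa using this
  -- hence g ≤ 0 on (-∞, a]
  have hgle : ∀ x, x ≤ a → g x ≤ 0 := by
    intro x hx
    refine ge_of_tendsto hgtend ?_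
    filter_upwards [eventually_le_atBot x] with t ht
    exact hganti (le_trans ht hx) hx ht
  -- hence h is monotone on (-∞, a]
  have hhmono : MonotoneOn h (Iic a) := by
    apply monotoneOn_of_deriv_nonneg (convex_Iic a) hdh.continuous.continuousOn
      (hdh.differentiableOn)
    intro x hx
    rw [interior_Iic] at hx
    rw [dirac_deriv_h θ ε ψ₁ ψ₂ hd1 hd2 heq1 heq2]
    have h1 := hθ0 x
    have h3 : ψ₁ x * ψ₁ x - ψ₂ x * ψ₂ x ≤ 0 := hgle x (le_of_lt hx)
    nlinarith [mul_self_nonneg (ψ₁ x), mul_self_nonneg (ψ₂ x)]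
  have hhtend : Tendsto h atBot (nhds 0) := by
    have := hdecay1bot.mul hdecay2bot
    simpa using this
  have : 0 ≤ h a := by
    refine le_of_tendsto hhtend ?_
    filter_upwards [eventually_le_atBot a] with t ht
    exact hhmono ht (le_refl a) ht
  exact absurd this (not_le.mpr (hneg a le_rfl))

/-- Proposition (A.2) of Appendix A: for a bound state, `P(ξ_L) < 0 < P(ξ_R)` at
the effective turning points. -/
theorem dirac_P_sign_at_turning_points
    (θ : ℝ → ℝ) (hθ : Continuous θ) (hθ0 : ∀ ξ, 1 + θ ξ ≥ 0)
    (ε : ℝ) (hε : 0 < ε)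
    (ξL ξR : ℝ) (hLR : ξL < ξR)
    (hTL : 1 + θ ξL = ε) (hTR : 1 + θ ξR = ε)
    (ψ₁ ψ₂ : ℝ → ℝ)
    (hd1 : Differentiable ℝ ψ₁) (hd2 : Differentiable ℝ ψ₂)
    (heq1 : ∀ ξ, deriv ψ₁ ξ = (1 + θ ξ + ε) * ψ₂ ξ)
    (heq2 : ∀ ξ, deriv ψ₂ ξ = (1 + θ ξ - ε) * ψ₁ ξ)
    (hdecay1top : Tendsto ψ₁ atTop (nhds 0)) (hdecay1bot : Tendsto ψ₁ atBot (nhds 0))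
    (hdecay2top : Tendsto ψ₂ atTop (nhds 0)) (hdecay2bot : Tendsto ψ₂ atBot (nhds 0))
    (hnozero : ∀ ξ, (ξ ≤ ξL ∨ ξR ≤ ξ) → ψ₁ ξ ≠ 0 ∧ ψ₂ ξ ≠ 0) :
    ψ₁ ξR * ψ₂ ξR < 0 ∧ ψ₁ ξL * ψ₂ ξL > 0 ∧
      -ψ₂ ξL / ψ₁ ξL < 0 ∧ 0 < -ψ₂ ξR / ψ₁ ξR := by
  have hcont : Continuous fun x => ψ₁ x * ψ₂ x :=
    hd1.continuous.mul hd2.continuous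
  -- product is nonzero on the rays
  have hne : ∀ ξ, (ξ ≤ ξL ∨ ξR ≤ ξ) → ψ₁ ξ * ψ₂ ξ ≠ 0 := fun ξ hξ =>
    mul_ne_zero (hnozero ξ hξ).1 (hnozero ξ hξ).2
  -- sign at ξR
  have hR : ψ₁ ξR * ψ₂ ξR < 0 := by
    rcases lt_or_gt_of_ne (hne ξR (Or.inr le_rfl)) with h | h
    · exact h
    · exfalso
      apply dirac_ray_top θ hθ0 ε hε ψ₁ ψ₂ hd1 hd2 heq1 heq2 hdecay1top hdecay2top ξR
      intro ξ hξ
      by_contra hle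
      push_neg at hle
      have hlt : ψ₁ ξ * ψ₂ ξ < 0 :=
        lt_of_le_of_ne hle (hne ξ (Or.inr hξ))
      have := intermediate_value_Icc' hξ (hcont.continuousOn (s := Icc ξR ξ))
        (a := ξR) (b := ξ)
      have h0 : (0 : ℝ) ∈ Icc (ψ₁ ξ * ψ₂ ξ) (ψ₁ ξR * ψ₂ ξR) :=
        ⟨le_of_lt hlt, le_of_lt h⟩
      obtain ⟨c, hc, hc0⟩ := this h0
      exact hne c (Or.inr hc.1) hc0
  -- sign at ξL
  have hL : 0 < ψ₁ ξL * ψ₂ ξL := by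
    rcases lt_or_gt_of_ne (hne ξL (Or.inl le_rfl)) with h | h
    · exfalso
      apply dirac_ray_bot θ hθ0 ε hε ψ₁ ψ₂ hd1 hd2 heq1 heq2 hdecay1bot hdecay2bot ξL
      intro ξ hξ
      by_contra hle
      push_neg at hle
      have hlt : 0 < ψ₁ ξ * ψ₂ ξ :=
        lt_of_le_of_ne hle (Ne.symm (hne ξ (Or.inl hξ)))
      have := intermediate_value_Icc' hξ (hcont.continuousOn (s := Icc ξ ξL))
        (a := ξ) (b := ξL)
      have h0 : (0 : ℝ) ∈ Icc (ψ₁ ξL * ψ₂ ξL) (ψ₁ ξ * ψ₂ ξ) :=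
        ⟨le_of_lt h, le_of_lt hlt⟩
      obtain ⟨c, hc, hc0⟩ := this h0
      exact hne c (Or.inl hc.2) hc0
    · exact h
  refine ⟨hR, hL, ?_, ?_⟩
  · have h1 : ψ₁ ξL ≠ 0 := (hnozero ξL (Or.inl le_rfl)).1
    have hsq : 0 < ψ₁ ξL * ψ₁ ξL := mul_self_pos.mpr h1
    have : -ψ₂ ξL / ψ₁ ξL = -(ψ₁ ξL * ψ₂ ξL) / (ψ₁ ξL * ψ₁ ξL) := by
      field_simp
    rw [this]
    exact div_neg_of_neg_of_pos (by linarith) hsq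
  · have h1 : ψ₁ ξR ≠ 0 := (hnozero ξR (Or.inr le_rfl)).1
    have hsq : 0 < ψ₁ ξR * ψ₁ ξR := mul_self_pos.mpr h1
    have : -ψ₂ ξR / ψ₁ ξR = -(ψ₁ ξR * ψ₂ ξR) / (ψ₁ ξR * ψ₁ ξR) := by
      field_simp
    rw [this]
    exact div_pos (by linarith) hsq
end

section
/- Let θ : ℝ → ℝ be continuous with 1 + θ(ξ) ≥ 0 for all ξ, let ε > 0, and let ξ_R ∈ ℝ. Let ψ₁, ψ₂ : ℝ → ℝ be a not-identically-zero differentiable solution of ψ₁' = (1+θ+ε)ψ₂, ψ₂' = (1+θ−ε)ψ₁ such that ψ₁(ξ) → 0 as ξ → ∞ and ψ₂(ξ) ≠ 0 for all ξ > ξ_R. Then ψ₁(ξ_R) ≠ 0. Symmetrically, if ψ₁(ξ) → 0 as ξ → −∞ and ψ₂(ξ) ≠ 0 for all ξ < ξ_L, then ψ₁(ξ_L) ≠ 0. -/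
open Filter Set

lemma sign_const_Ioi (f : ℝ → ℝ) (hf : Continuous f) (a : ℝ)
    (h : ∀ ξ, a < ξ → f ξ ≠ 0) :
    (∀ ξ, a < ξ → 0 < f ξ) ∨ (∀ ξ, a < ξ → f ξ < 0) := by
  have h1 : f (a + 1) ≠ 0 := h _ (by linarith)
  rcases h1.lt_or_gt with hneg | hpos
  · right
    intro ξ hξ
    by_contra hc
    push_neg at hc
    have hp : 0 < f ξ := lt_of_le_of_ne hc (Ne.symm (h ξ hξ))
    have hm : (0 : ℝ) ∈ uIcc (f (a + 1)) (f ξ) := by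
      rw [mem_uIcc]; left; exact ⟨hneg.le, hp.le⟩
    obtain ⟨c, hc1, hc2⟩ := intermediate_value_uIcc (f := f) hf.continuousOn hm
    have hca : a < c := by
      rcases mem_uIcc.mp hc1 with ⟨h1, _⟩ | ⟨h1, _⟩ <;> linarith
    exact h c hca hc2
  · left
    intro ξ hξ
    by_contra hc
    push_neg at hc
    have hp : f ξ < 0 := lt_of_le_of_ne hc (h ξ hξ)
    have hm : (0 : ℝ) ∈ uIcc (f (a + 1)) (f ξ) := by
      rw [mem_uIcc]; right; exact ⟨hp.le, hpos.le⟩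
    obtain ⟨c, hc1, hc2⟩ := intermediate_value_uIcc (f := f) hf.continuousOn hm
    have hca : a < c := by
      rcases mem_uIcc.mp hc1 with ⟨h1, _⟩ | ⟨h1, _⟩ <;> linarith
    exact h c hca hc2

lemma sign_const_Iio (f : ℝ → ℝ) (hf : Continuous f) (a : ℝ)
    (h : ∀ ξ, ξ < a → f ξ ≠ 0) :
    (∀ ξ, ξ < a → 0 < f ξ) ∨ (∀ ξ, ξ < a → f ξ < 0) := by
  have := sign_const_Ioi (fun x => f (-x)) (hf.comp continuous_neg) (-a)
    (fun ξ hξ => h (-ξ) (by linarith))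
  rcases this with H | H
  · left; intro ξ hξ; simpa using H (-ξ) (by linarith)
  · right; intro ξ hξ; simpa using H (-ξ) (by linarith)

/-- Inequality (A.6) of Appendix A: an effective turning point cannot be a node of
`ψ₁`, so `P = -ψ₂/ψ₁` is finite there. -/
theorem dirac_turning_point_not_node
    (θ : ℝ → ℝ) (hθ : Continuous θ) (hθ0 : ∀ ξ, 1 + θ ξ ≥ 0)
    (ε : ℝ) (hε : 0 < ε)
    (ψ₁ ψ₂ : ℝ → ℝ)
    (hd1 : Differentiable ℝ ψ₁) (hd2 : Differentiable ℝ ψ₂)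
    (heq1 : ∀ ξ, deriv ψ₁ ξ = (1 + θ ξ + ε) * ψ₂ ξ)
    (heq2 : ∀ ξ, deriv ψ₂ ξ = (1 + θ ξ - ε) * ψ₁ ξ)
    (hnontriv : ∃ ξ, ψ₁ ξ ≠ 0 ∨ ψ₂ ξ ≠ 0) :
    (∀ ξR : ℝ, Tendsto ψ₁ atTop (nhds 0) → (∀ ξ, ξR < ξ → ψ₂ ξ ≠ 0) → ψ₁ ξR ≠ 0) ∧
    (∀ ξL : ℝ, Tendsto ψ₁ atBot (nhds 0) → (∀ ξ, ξ < ξL → ψ₂ ξ ≠ 0) → ψ₁ ξL ≠ 0) := by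
  have hcoef : ∀ ξ, 0 < 1 + θ ξ + ε := fun ξ => by have := hθ0 ξ; linarith
  constructor
  · intro ξR hlim hnz h0
    rcases sign_const_Ioi ψ₂ hd2.continuous ξR hnz with hpos | hneg
    · -- ψ₁ strictly increasing on [ξR, ∞)
      have hmono : StrictMonoOn ψ₁ (Ici ξR) := by
        apply strictMonoOn_of_deriv_pos (convex_Ici ξR) hd1.continuous.continuousOn
        intro x hx
        rw [interior_Ici] at hx
        rw [heq1 x]
        exact mul_pos (hcoef x) (hpos x hx)
      have hc : 0 < ψ₁ (ξR + 1) := by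
        have := hmono (self_mem_Ici) (by simp : ξR + 1 ∈ Ici ξR) (by linarith)
        rwa [h0] at this
      have hge : 0 ≥ ψ₁ (ξR + 1) := by
        refine ge_of_tendsto hlim ?_
        filter_upwards [eventually_ge_atTop (ξR + 1)] with x hx
        exact (hmono.monotoneOn (by simp) (by simp; linarith) hx)
      linarith
    · have hmono : StrictAntiOn ψ₁ (Ici ξR) := by
        apply strictAntiOn_of_deriv_neg (convex_Ici ξR) hd1.continuous.continuousOn
        intro x hx
        rw [interior_Ici] at hx
        rw [heq1 x]
        exact mul_neg_of_pos_of_neg (hcoef x) (hneg x hx)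
      have hc : ψ₁ (ξR + 1) < 0 := by
        have := hmono (self_mem_Ici) (by simp : ξR + 1 ∈ Ici ξR) (by linarith)
        rwa [h0] at this
      have hle : 0 ≤ ψ₁ (ξR + 1) := by
        refine le_of_tendsto hlim ?_
        filter_upwards [eventually_ge_atTop (ξR + 1)] with x hx
        exact (hmono.antitoneOn (by simp) (by simp; linarith) hx)
      linarith
  · intro ξL hlim hnz h0
    rcases sign_const_Iio ψ₂ hd2.continuous ξL hnz with hpos | hneg
    · -- ψ₁ strictly increasing on (-∞, ξL], so ψ₁ < 0 before ξL
      have hmono : StrictMonoOn ψ₁ (Iic ξL) := by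
        apply strictMonoOn_of_deriv_pos (convex_Iic ξL) hd1.continuous.continuousOn
        intro x hx
        rw [interior_Iic] at hx
        rw [heq1 x]
        exact mul_pos (hcoef x) (hpos x hx)
      have hc : ψ₁ (ξL - 1) < 0 := by
        have := hmono (by simp : ξL - 1 ∈ Iic ξL) self_mem_Iic (by linarith)
        rwa [h0] at this
      have hle : 0 ≤ ψ₁ (ξL - 1) := by
        refine le_of_tendsto hlim ?_
        filter_upwards [eventually_le_atBot (ξL - 1)] with x hx
        exact (hmono.monotoneOn (by simp; linarith) (by simp) hx)
      linarith
    · have hmono : StrictAntiOn ψ₁ (Iic ξL) := by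
        apply strictAntiOn_of_deriv_neg (convex_Iic ξL) hd1.continuous.continuousOn
        intro x hx
        rw [interior_Iic] at hx
        rw [heq1 x]
        exact mul_neg_of_pos_of_neg (hcoef x) (hneg x hx)
      have hc : 0 < ψ₁ (ξL - 1) := by
        have := hmono (by simp : ξL - 1 ∈ Iic ξL) self_mem_Iic (by linarith)
        rwa [h0] at this
      have hge : 0 ≥ ψ₁ (ξL - 1) := by
        refine ge_of_tendsto hlim ?_
        filter_upwards [eventually_le_atBot (ξL - 1)] with x hx
        exact (hmono.antitoneOn (by simp; linarith) (by simp) hx)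
      linarith
end
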